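/- In the N-player Prisoner's Dilemma, if player 1 cooperates and k of her N-1 opponents cooperate, then μ¹(U(C,s^{-1})) = ((N-(k+1))/(N-1))·(v(C,k) - v(D,k+1)) ≤ 0; and if she defects and k opponents cooperate, then μ¹(U(D,s^{-1})) = (k/(N-1))·(v(D,k) - v(C,k-1)) ≥ 0. -/

import Mathlib

open Finset

/-- In the `N`-player Prisoner's Dilemma: if player 1 cooperates and `k` of her `N-1`
opponents cooperate, then `μ¹(U(C,s⁻¹)) = ((N-(k+1))/(N-1))(v(C,k) - v(D,k+1)) ≤ 0`;
if she defects with `k` cooperating opponents, `μ¹(U(D,s⁻¹)) = (k/(N-1))(v(D,k) - v(C,k-1)) ≥ 0`. -/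
theorem mu_one_sign (N : ℕ) (hN : 2 ≤ N) (vC vD : ℕ → ℝ)
    (hdom : ∀ k ≤ N - 1, vC k < vD k)
    (hmono : ∀ k ≤ N - 2, vD k ≤ vD (k + 1))
    (s : Fin N → Bool)
    (U : Fin N → ℝ)
    (hU : ∀ i, U i = if s i then vC ((univ.filter fun j => j ≠ i ∧ s j = true)).card
                     else vD ((univ.filter fun j => j ≠ i ∧ s j = true)).card)
    (k : ℕ)
    (hk : k = ((univ.filter fun j => j ≠ (⟨0, by omega⟩ : Fin N) ∧ s j = true)).card)
    (μ : ℝ)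
    (hμ : μ = U ⟨0, by omega⟩ -
      (1 / ((N : ℝ) - 1)) * ∑ j ∈ univ.filter (fun j => j ≠ (⟨0, by omega⟩ : Fin N)), U j) :
    (s ⟨0, by omega⟩ = true →
      μ = (((N : ℝ) - (k + 1)) / ((N : ℝ) - 1)) * (vC k - vD (k + 1)) ∧ μ ≤ 0) ∧
    (s ⟨0, by omega⟩ = false →
      μ = ((k : ℝ) / ((N : ℝ) - 1)) * (vD k - vC (k - 1)) ∧ 0 ≤ μ) := by
  set z : Fin N := ⟨0, by omega⟩ with hzdef
  have hNR : (2:ℝ) ≤ (N:ℝ) := by exact_mod_cast hN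
  have hNne : (N:ℝ) - 1 ≠ 0 := by linarith
  set C := univ.filter (fun j => s j = true) with hC
  have hcount : ∀ i : Fin N, univ.filter (fun j => j ≠ i ∧ s j = true) = C.erase i := by
    intro i; ext j; simp [hC, Finset.mem_erase, and_comm]
  have hkcard : k = (C.erase z).card := by rw [hk, hcount]
  have hoppcard : (univ.erase z).card = N - 1 := by
    rw [card_erase_of_mem (mem_univ z), card_univ, Fintype.card_fin]
  have hkleN : k ≤ N - 1 := by
    have h1 : (C.erase z).card ≤ (univ.erase z).card :=
      card_le_card (erase_subset_erase _ (filter_subset _ _))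
    omega
  have hopp : univ.filter (fun j => j ≠ z) = univ.erase z := by
    ext j; simp [Finset.mem_erase]
  have hcoop : (univ.erase z).filter (fun j => s j = true) = C.erase z := by
    ext j; simp [hC, Finset.mem_erase, and_comm]
  have hdefcard : ((univ.erase z).filter (fun j => ¬ s j = true)).card = N - 1 - k := by
    have h := card_filter_add_card_filter_not
      (s := univ.erase z) (p := fun j => s j = true)
    rw [hcoop, ← hkcard, hoppcard] at h
    omega
  -- values of opponents
  have hcoopval : ∀ j ∈ (univ.erase z).filter (fun j => s j = true),
      U j = vC (C.card - 1) := by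
    intro j hj
    simp only [mem_filter, mem_erase] at hj
    have hjC : j ∈ C := by simp [hC, hj.2]
    rw [hU j, hcount j, if_pos hj.2, card_erase_of_mem hjC]
  have hdefval : ∀ j ∈ (univ.erase z).filter (fun j => ¬ s j = true),
      U j = vD C.card := by
    intro j hj
    simp only [mem_filter, mem_erase] at hj
    have hjC : j ∉ C := by simp [hC, hj.2]
    rw [hU j, hcount j, if_neg hj.2, erase_eq_of_notMem hjC]
  have hsum : ∑ j ∈ univ.filter (fun j => j ≠ z), U j
      = k * vC (C.card - 1) + (N - 1 - k : ℕ) * vD C.card := by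
    rw [hopp, ← sum_filter_add_sum_filter_not (univ.erase z) (fun j => s j = true) U]
    rw [sum_congr rfl hcoopval, sum_congr rfl hdefval, sum_const, sum_const,
      hcoop, ← hkcard, hdefcard]
    simp [nsmul_eq_mul]
  have hkR : ((N - 1 - k : ℕ) : ℝ) = (N : ℝ) - 1 - k := by
    have h1 : 1 ≤ N := by omega
    push_cast [Nat.cast_sub hkleN, Nat.cast_sub h1]
    ring
  rw [hkR] at hsum
  constructor
  · intro hsz
    have hzC : z ∈ C := by simp [hC, hsz]
    have hCcard : C.card = k + 1 := by
      have := card_erase_of_mem hzC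
      have hpos : 1 ≤ C.card := card_pos.mpr ⟨z, hzC⟩
      omega
    have hUz : U z = vC k := by
      rw [hU z, hcount z, if_pos hsz, ← hkcard]
    rw [hsum, hUz, hCcard, Nat.add_sub_cancel] at hμ
    have heq : μ = (((N : ℝ) - (k + 1)) / ((N : ℝ) - 1)) * (vC k - vD (k + 1)) := by
      rw [hμ]; field_simp; ring
    refine ⟨heq, ?_⟩
    rw [heq]
    rcases Nat.lt_or_ge k (N - 1) with hlt | hge
    · have hd : vC k - vD (k + 1) ≤ 0 := by
        have h1 := hdom k (by omega)
        have h2 := hmono k (by omega)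
        linarith
      have hf : 0 ≤ ((N : ℝ) - (k + 1)) / ((N : ℝ) - 1) := by
        apply div_nonneg
        · have : (k : ℝ) ≤ (N : ℝ) - 1 := by
            have : (k : ℝ) ≤ ((N - 1 : ℕ) : ℝ) := by exact_mod_cast hkleN
            rw [Nat.cast_sub (by omega)] at this; push_cast at this; linarith
          linarith
        · linarith
      exact mul_nonpos_iff.2 (Or.inl ⟨hf, hd⟩)
    · have hkeq : k = N - 1 := le_antisymm hkleN hge
      have : ((N : ℝ) - (k + 1)) = 0 := by
        rw [hkeq, Nat.cast_sub (by omega)]; push_cast; ring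
      rw [this]; simp
  · intro hsz
    have hzC : z ∉ C := by simp [hC, hsz]
    have hCcard : C.card = k := by
      rw [hkcard, erase_eq_of_notMem hzC]
    have hUz : U z = vD k := by
      rw [hU z, hcount z, if_neg (by simp [hsz]), ← hkcard]
    rw [hsum, hUz, hCcard] at hμ
    have heq : μ = ((k : ℝ) / ((N : ℝ) - 1)) * (vD k - vC (k - 1)) := by
      rcases Nat.eq_zero_or_pos k with hk0 | hkpos
      · subst hk0; rw [hμ]; push_cast; field_simp; ring
      · have : (k : ℕ) - 1 + 1 = k := by omega
        rw [hμ]; field_simp; ring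
    refine ⟨heq, ?_⟩
    rw [heq]
    rcases Nat.eq_zero_or_pos k with hk0 | hkpos
    · subst hk0; simp
    · have hd : 0 ≤ vD k - vC (k - 1) := by
        have h1 := hdom (k - 1) (by omega)
        have h2 : vD (k - 1) ≤ vD k := by
          have := hmono (k - 1) (by omega)
          have hk1 : k - 1 + 1 = k := by omega
          rwa [hk1] at this
        linarith
      have hf : 0 ≤ (k : ℝ) / ((N : ℝ) - 1) := by
        apply div_nonneg (by positivity); linarith
      exact mul_nonneg hf hd
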